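/- Let U be an undirected graph and α a total order on its vertices. Orient each edge {A,B} of U as A→B if A < B in α. If U is chordal, then there exists a total order α for which the resulting orientation has no unshielded collider. -/

import Mathlib

/-- An undirected graph is chordal: every cycle of length at least 4 has a chord. -/
def ChordalGraph {V : Type*} (G : SimpleGraph V) : Prop :=
  ∀ ⦃v : V⦄ (c : G.Walk v v), c.IsCycle → 4 ≤ c.length →
    ∃ a b, a ∈ c.support ∧ b ∈ c.support ∧ G.Adj a b ∧ s(a, b) ∉ c.edges

/-- The orientation of the edges of U induced by a strict total order r:
edge {A,B} is directed A→B iff r A B. -/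
def OrderOrientation {V : Type*} (U : SimpleGraph V) (r : V → V → Prop) :
    V → V → Prop :=
  fun a b => U.Adj a b ∧ r a b

/-- D has an unshielded collider a → b ← c with a, c non-adjacent in U. -/
def HasUnshieldedCollider {V : Type*} (U : SimpleGraph V) (D : V → V → Prop) : Prop :=
  ∃ a b c, D a b ∧ D c b ∧ a ≠ c ∧ ¬ U.Adj a c

open SimpleGraph

section Auxiliary

variable {V : Type*} {U : SimpleGraph V}

/-- a walk staying inside Z -/
def WalkIn (U : SimpleGraph V) (Z : Set V) {x y : V} (w : U.Walk x y) : Prop :=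
  ∀ u ∈ w.support, u ∈ Z

/-- a minimal-length walk from x to y inside Z -/
def MinWalkIn (U : SimpleGraph V) (Z : Set V) {x y : V} (w : U.Walk x y) : Prop :=
  WalkIn U Z w ∧ ∀ w' : U.Walk x y, WalkIn U Z w' → w.length ≤ w'.length

/-- reachability within Z -/
def ReachIn (U : SimpleGraph V) (Z : Set V) (x y : V) : Prop :=
  ∃ w : U.Walk x y, WalkIn U Z w

lemma ReachIn.refl' {Z : Set V} {x : V} (hx : x ∈ Z) : ReachIn U Z x x :=
  ⟨SimpleGraph.Walk.nil, by simp [WalkIn, hx]⟩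

lemma ReachIn.symm' {Z : Set V} {x y : V} (h : ReachIn U Z x y) : ReachIn U Z y x := by
  obtain ⟨w, hw⟩ := h
  exact ⟨w.reverse, fun u hu => hw u (by simpa using hu)⟩

lemma ReachIn.trans' {Z : Set V} {x y z : V} (h : ReachIn U Z x y) (h' : ReachIn U Z y z) :
    ReachIn U Z x z := by
  obtain ⟨w, hw⟩ := h; obtain ⟨w', hw'⟩ := h'
  refine ⟨w.append w', fun u hu => ?_⟩
  rw [SimpleGraph.Walk.mem_support_append_iff] at hu
  exact hu.elim (hw u) (hw' u)

lemma ReachIn.adj' {Z : Set V} {x y : V} (hx : x ∈ Z) (hy : y ∈ Z) (h : U.Adj x y) :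
    ReachIn U Z x y :=
  ⟨h.toWalk, by intro u hu; simp at hu; rcases hu with rfl | rfl <;> assumption⟩

lemma exists_minWalkIn {Z : Set V} {x y : V} (h : ReachIn U Z x y) :
    ∃ w : U.Walk x y, MinWalkIn U Z w := by
  classical
  have hne : {n | ∃ w : U.Walk x y, WalkIn U Z w ∧ w.length = n}.Nonempty := by
    obtain ⟨w, hw⟩ := h; exact ⟨w.length, w, hw, rfl⟩
  obtain ⟨w, hw, hlen⟩ := Nat.sInf_mem hne
  refine ⟨w, hw, fun w' hw' => ?_⟩
  rw [hlen]
  exact Nat.sInf_le ⟨w', hw', rfl⟩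

lemma minWalkIn_isPath_aux {Z : Set V} : ∀ {x y : V} (w : U.Walk x y), MinWalkIn U Z w → w.IsPath := by
  classical
  intro x y w
  induction w with
  | nil => intro _; simp
  | @cons x x' y h p ih =>
    intro ⟨hin, hmin⟩
    have hpin : WalkIn U Z p := fun u hu => hin u (by simp [hu])
    have hp : MinWalkIn U Z p := by
      refine ⟨hpin, fun p' hp' => ?_⟩
      have := hmin (SimpleGraph.Walk.cons h p') (by
        intro u hu; simp at hu
        rcases hu with rfl | hu
        · exact hin u (by simp)
        · exact hp' u hu)
      simpa using this
    refine (ih hp).cons ?_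
    intro hx
    have hd := hmin (p.dropUntil x hx) (fun u hu => hpin u (p.support_dropUntil_subset hx hu))
    have h1 := SimpleGraph.Walk.length_takeUntil_le p hx
    have h2 : (p.takeUntil x hx).length + (p.dropUntil x hx).length = p.length := by
      conv_rhs => rw [← p.take_spec hx]
      rw [SimpleGraph.Walk.length_append]
    simp only [SimpleGraph.Walk.length_cons] at hd
    omega

lemma minWalkIn_edge_aux {Z : Set V} :
    ∀ {x y : V} (w : U.Walk x y), MinWalkIn U Z w → ∀ {u v : V}, U.Adj u v →
      u ∈ w.support → v ∈ w.support → s(u, v) ∈ w.edges := by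
  classical
  intro x y w
  induction w with
  | nil =>
    intro _ u v hadj hu hv
    simp at hu hv; subst hu; subst hv; exact absurd hadj (U.irrefl)
  | @cons x x' y h p ih =>
    intro ⟨hin, hmin⟩ u v hadj hu hv
    have hpin : WalkIn U Z p := fun u hu => hin u (by simp [hu])
    have hp : MinWalkIn U Z p := by
      refine ⟨hpin, fun p' hp' => ?_⟩
      have := hmin (SimpleGraph.Walk.cons h p') (by
        intro u hu; simp at hu
        rcases hu with rfl | hu
        · exact hin u (by simp)
        · exact hp' u hu)
      simpa using this
    -- key shortcut argument
    have key : ∀ (v' : V), U.Adj x v' → v' ∈ p.support → s(x, v') ∈ (SimpleGraph.Walk.cons h p).edges := by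
      intro v' hadj' hv'
      by_cases hvx : v' = x'
      · subst hvx; simp
      · exfalso
        have hw' : WalkIn U Z (SimpleGraph.Walk.cons hadj' (p.dropUntil v' hv')) := by
          intro z hz; simp at hz
          rcases hz with rfl | hz
          · exact hin z (by simp)
          · exact hpin z (p.support_dropUntil_subset hv' hz)
        have hd := hmin _ hw'
        have h2 : (p.takeUntil v' hv').length + (p.dropUntil v' hv').length = p.length := by
          conv_rhs => rw [← p.take_spec hv']
          rw [SimpleGraph.Walk.length_append]
        have h3 : (p.takeUntil v' hv').length ≠ 0 := fun h0 =>
          hvx (SimpleGraph.Walk.eq_of_length_eq_zero h0).symm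
        simp only [SimpleGraph.Walk.length_cons] at hd
        omega
    simp only [SimpleGraph.Walk.support_cons, List.mem_cons] at hu hv
    rcases hu with rfl | hu
    · rcases hv with rfl | hv
      · exact absurd hadj (U.irrefl)
      · exact key _ hadj hv
    · rcases hv with rfl | hv
      · have := key _ hadj.symm hu
        rwa [Sym2.eq_swap] at this
      · have := ih hp hadj hu hv
        simp only [SimpleGraph.Walk.edges_cons, List.mem_cons]
        exact Or.inr this


lemma MinWalkIn.isPath {Z : Set V} {x y : V} {w : U.Walk x y} (h : MinWalkIn U Z w) :
    w.IsPath := minWalkIn_isPath_aux w h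

lemma MinWalkIn.edge_mem {Z : Set V} {x y : V} {w : U.Walk x y} (h : MinWalkIn U Z w)
    {u v : V} (hadj : U.Adj u v) (hu : u ∈ w.support) (hv : v ∈ w.support) :
    s(u, v) ∈ w.edges := minWalkIn_edge_aux w h hadj hu hv

lemma end_not_mem_takeUntil [DecidableEq V] {a c u : V} {w : U.Walk a c} (hw : w.IsPath)
    (hu : u ∈ w.support) (huc : u ≠ c) : c ∉ (w.takeUntil u hu).support := by
  intro hc
  have hnd : ((w.takeUntil u hu).support ++ (w.dropUntil u hu).support.tail).Nodup := by
    rw [← Walk.support_append, Walk.take_spec]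
    exact hw.support_nodup
  have hc2 : c ∈ (w.dropUntil u hu).support.tail := by
    have h3 := (w.dropUntil u hu).end_mem_support
    rw [(w.dropUntil u hu).support_eq_cons] at h3
    exact (List.mem_cons.mp h3).resolve_left (fun h => huc h.symm)
  exact (List.disjoint_of_nodup_append hnd) hc hc2

lemma start_not_mem_dropUntil [DecidableEq V] {a c u : V} {w : U.Walk a c} (hw : w.IsPath)
    (hu : u ∈ w.support) (hua : u ≠ a) : a ∉ (w.dropUntil u hu).support := by
  intro ha
  have hnd : ((w.takeUntil u hu).support ++ (w.dropUntil u hu).support.tail).Nodup := by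
    rw [← Walk.support_append, Walk.take_spec]
    exact hw.support_nodup
  have ha2 : a ∈ (w.dropUntil u hu).support.tail := by
    have := (w.dropUntil u hu).support_eq_cons
    rw [this] at ha
    exact (List.mem_cons.mp ha).resolve_left (fun h => hua h.symm)
  exact (List.disjoint_of_nodup_append hnd) (w.takeUntil u hu).start_mem_support ha2

lemma sepClique (hchordal : ChordalGraph U) {s S : Set V} {a b : V}
    (hnadj : ¬ U.Adj a b)
    (hSs : S ⊆ s) (haS : a ∉ S) (hbS : b ∉ S) (has : a ∈ s)
    (hsep : ¬ ReachIn U (s \ S) a b)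
    (hmin : ∀ x ∈ S, ReachIn U ((s \ S) ∪ {x}) a b) :
    ∀ x ∈ S, ∀ y ∈ S, x ≠ y → U.Adj x y := by
  classical
  intro x hxS y hyS hxy
  by_contra hnxy
  set A : Set V := {u | u ∈ s \ S ∧ ReachIn U (s \ S) a u} with hA
  set B : Set V := {u | u ∈ s \ S ∧ ReachIn U (s \ S) b u} with hB
  have hABdisj : ∀ u, u ∈ A → u ∈ B → False := fun u hu hv =>
    hsep (hu.2.trans' hv.2.symm')
  have hABnadj : ∀ u ∈ A, ∀ v ∈ B, ¬ U.Adj u v := by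
    intro u hu v hv hadj
    exact hsep ((hu.2.trans' (ReachIn.adj' hu.1 hv.1 hadj)).trans' hv.2.symm')
  -- for each z ∈ S, walks from a and b to z staying in A (resp. B) internally
  have key : ∀ z ∈ S, (∃ wA : U.Walk a z, WalkIn U (A ∪ {z}) wA) ∧
      (∃ wB : U.Walk b z, WalkIn U (B ∪ {z}) wB) := by
    intro z hzS
    obtain ⟨w0, hw0⟩ := hmin z hzS
    set P := w0.bypass with hP
    have hPpath : P.IsPath := w0.bypass_isPath
    have hPin : WalkIn U ((s \ S) ∪ {z}) P := fun u hu => hw0 u (w0.support_bypass_subset hu)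
    have hzP : z ∈ P.support := by
      by_contra hz
      refine hsep ⟨P, fun u hu => ?_⟩
      rcases hPin u hu with h | h
      · exact h
      · exact absurd (Set.mem_singleton_iff.mp h ▸ hu) hz
    constructor
    · refine ⟨P.takeUntil z hzP, fun u hu => ?_⟩
      by_cases huz : u = z
      · exact Or.inr (huz ▸ rfl)
      · left
        have husS : u ∈ s \ S := by
          rcases hPin u (P.support_takeUntil_subset hzP hu) with h | h
          · exact h
          · exact absurd h huz
        refine ⟨husS, ⟨(P.takeUntil z hzP).takeUntil u hu, fun v hv => ?_⟩⟩
        have hvz : v ≠ z := by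
          intro h'
          exact end_not_mem_takeUntil (hPpath.takeUntil hzP) hu huz (h' ▸ hv)
        rcases hPin v (P.support_takeUntil_subset hzP
          ((P.takeUntil z hzP).support_takeUntil_subset hu hv)) with h | h
        · exact h
        · exact absurd h hvz
    · refine ⟨(P.dropUntil z hzP).reverse, fun u hu => ?_⟩
      rw [Walk.support_reverse, List.mem_reverse] at hu
      by_cases huz : u = z
      · exact Or.inr (huz ▸ rfl)
      · left
        have husS : u ∈ s \ S := by
          rcases hPin u (P.support_dropUntil_subset hzP hu) with h | h
          · exact h
          · exact absurd h huz
        set D := P.dropUntil z hzP with hD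
        have hDpath : D.IsPath := hPpath.dropUntil hzP
        refine ⟨husS, ⟨(D.dropUntil u hu).reverse, fun v hv => ?_⟩⟩
        rw [Walk.support_reverse, List.mem_reverse] at hv
        have hvz : v ≠ z := by
          intro h'
          exact start_not_mem_dropUntil hDpath hu huz (h' ▸ hv)
        rcases hPin v (P.support_dropUntil_subset hzP (D.support_dropUntil_subset hu hv)) with h | h
        · exact h
        · exact absurd h hvz
  obtain ⟨⟨wAx, hwAx⟩, ⟨wBx, hwBx⟩⟩ := key x hxS
  obtain ⟨⟨wAy, hwAy⟩, ⟨wBy, hwBy⟩⟩ := key y hyS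
  set Z1 : Set V := A ∪ {x, y} with hZ1
  set Z2 : Set V := B ∪ {x, y} with hZ2
  have hxA : x ∉ A := fun h => h.1.2 hxS
  have hyA : y ∉ A := fun h => h.1.2 hyS
  have hxB : x ∉ B := fun h => h.1.2 hxS
  have hyB : y ∉ B := fun h => h.1.2 hyS
  have hZ12 : ∀ u, u ∈ Z1 → u ∈ Z2 → u = x ∨ u = y := by
    intro u h1 h2
    rcases h1 with h1 | h1
    · rcases h2 with h2 | h2
      · exact absurd h2 (fun h2 => hABdisj u h1 h2)
      · exact h2
    · exact h1
  have hreach1 : ReachIn U Z1 x y := by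
    refine ⟨wAx.reverse.append wAy, fun u hu => ?_⟩
    rw [Walk.mem_support_append_iff] at hu
    rcases hu with hu | hu
    · rw [Walk.support_reverse, List.mem_reverse] at hu
      rcases hwAx u hu with h | h
      · exact Or.inl h
      · exact Or.inr (Or.inl h)
    · rcases hwAy u hu with h | h
      · exact Or.inl h
      · exact Or.inr (Or.inr h)
  have hreach2 : ReachIn U Z2 x y := by
    refine ⟨wBx.reverse.append wBy, fun u hu => ?_⟩
    rw [Walk.mem_support_append_iff] at hu
    rcases hu with hu | hu
    · rw [Walk.support_reverse, List.mem_reverse] at hu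
      rcases hwBx u hu with h | h
      · exact Or.inl h
      · exact Or.inr (Or.inl h)
    · rcases hwBy u hu with h | h
      · exact Or.inl h
      · exact Or.inr (Or.inr h)
  obtain ⟨P1, hP1⟩ := exists_minWalkIn hreach1
  obtain ⟨P2, hP2⟩ := exists_minWalkIn hreach2
  have hlen1 : 2 ≤ P1.length := by
    by_contra h
    interval_cases h' : P1.length
    · exact hxy (Walk.eq_of_length_eq_zero h')
    · exact hnxy (Walk.adj_of_length_eq_one h')
  have hlen2 : 2 ≤ P2.length := by
    by_contra h
    interval_cases h' : P2.length
    · exact hxy (Walk.eq_of_length_eq_zero h')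
    · exact hnxy (Walk.adj_of_length_eq_one h')
  set C : U.Walk x x := P1.append P2.reverse with hC
  have hClen : 4 ≤ C.length := by
    rw [hC, Walk.length_append, Walk.length_reverse]; omega
  -- membership facts
  have hmemC : ∀ u ∈ C.support, u ∈ P1.support ∨ u ∈ P2.support := by
    intro u hu
    rw [hC, Walk.mem_support_append_iff] at hu
    rcases hu with hu | hu
    · exact Or.inl hu
    · rw [Walk.support_reverse, List.mem_reverse] at hu; exact Or.inr hu
  have hsub1 : ∀ u ∈ P1.support, u ∈ Z1 := fun u hu => hP1.1 u hu
  have hsub2 : ∀ u ∈ P2.support, u ∈ Z2 := fun u hu => hP2.1 u hu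
  have hxy_mem1 : x ∈ P1.support ∧ y ∈ P1.support := ⟨P1.start_mem_support, P1.end_mem_support⟩
  have hxy_mem2 : x ∈ P2.support ∧ y ∈ P2.support := ⟨P2.start_mem_support, P2.end_mem_support⟩
  have hZ1toP1 : ∀ u ∈ C.support, u ∈ Z1 → u ∈ P1.support := by
    intro u hu h1
    rcases hmemC u hu with h | h
    · exact h
    · rcases hZ12 u h1 (hsub2 u h) with rfl | rfl
      · exact hxy_mem1.1
      · exact hxy_mem1.2
  have hZ2toP2 : ∀ u ∈ C.support, u ∈ Z2 → u ∈ P2.support := by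
    intro u hu h2
    rcases hmemC u hu with h | h
    · rcases hZ12 u (hsub1 u h) h2 with rfl | rfl
      · exact hxy_mem2.1
      · exact hxy_mem2.2
    · exact h
  -- cycle
  have hcyc : C.IsCycle := by
    refine ⟨⟨?_, ?_⟩, ?_⟩
    · -- IsTrail : edges nodup
      rw [Walk.isTrail_def, hC, Walk.edges_append, Walk.edges_reverse]
      refine List.Nodup.append hP1.isPath.isTrail.edges_nodup
        (by rw [List.nodup_reverse]; exact hP2.isPath.isTrail.edges_nodup) ?_
      intro e he1 he2
      rw [List.mem_reverse] at he2
      induction e with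
      | h u v =>
        have hu1 := P1.fst_mem_support_of_mem_edges he1
        have hv1 := P1.snd_mem_support_of_mem_edges he1
        have hu2 := P2.fst_mem_support_of_mem_edges he2
        have hv2 := P2.snd_mem_support_of_mem_edges he2
        have hadj : U.Adj u v := P1.edges_subset_edgeSet he1
        rcases hZ12 u (hsub1 u hu1) (hsub2 u hu2) with rfl | rfl <;>
          rcases hZ12 v (hsub1 v hv1) (hsub2 v hv2) with rfl | rfl
        · exact U.irrefl hadj
        · exact hnxy hadj
        · exact hnxy hadj.symm
        · exact U.irrefl hadj
    · -- ne nil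
      intro h
      rw [h] at hClen
      simp at hClen
    · -- support tail nodup
      rw [hC, Walk.tail_support_append]
      refine List.Nodup.append ?_ ?_ ?_
      · have hnd1 := Walk.isPath_def _ |>.mp hP1.isPath
        rw [P1.support_eq_cons] at hnd1
        exact (List.nodup_cons.mp hnd1).2
      · have hnd2 := Walk.isPath_def _ |>.mp hP2.isPath.reverse
        rw [P2.reverse.support_eq_cons] at hnd2
        exact (List.nodup_cons.mp hnd2).2
      · intro u hu1 hu2
        have h1 : u ∈ P1.support ∧ u ≠ x := by
          constructor
          · exact List.mem_of_mem_tail hu1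
          · intro hux
            have hnd := Walk.isPath_def _ |>.mp hP1.isPath
            rw [P1.support_eq_cons] at hnd
            exact (List.nodup_cons.mp hnd).1 (hux ▸ hu1)
        have h2 : u ∈ P2.support ∧ u ≠ y := by
          constructor
          · have := List.mem_of_mem_tail hu2
            rw [Walk.support_reverse, List.mem_reverse] at this
            exact this
          · intro huy
            have hnd := Walk.isPath_def _ |>.mp hP2.isPath.reverse
            rw [P2.reverse.support_eq_cons] at hnd
            exact (List.nodup_cons.mp hnd).1 (huy ▸ hu2)
        rcases hZ12 u (hsub1 u h1.1) (hsub2 u h2.1) with rfl | rfl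
        · exact h1.2 rfl
        · exact h2.2 rfl
  -- chordality gives a chord; derive contradiction
  obtain ⟨u, v, hu, hv, hadj, hne⟩ := hchordal C hcyc hClen
  have hedge1 : s(u, v) ∈ P1.edges → False := by
    intro h
    exact hne (by rw [hC, Walk.edges_append]; exact List.mem_append_left _ h)
  have hedge2 : s(u, v) ∈ P2.edges → False := by
    intro h
    apply hne
    rw [hC, Walk.edges_append]
    refine List.mem_append_right _ ?_
    rw [Walk.edges_reverse, List.mem_reverse]; exact h
  have hcase1 : u ∈ Z1 → v ∈ Z1 → False := fun h1 h2 =>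
    hedge1 (hP1.edge_mem hadj (hZ1toP1 u hu h1) (hZ1toP1 v hv h2))
  have hcase2 : u ∈ Z2 → v ∈ Z2 → False := fun h1 h2 =>
    hedge2 (hP2.edge_mem hadj (hZ2toP2 u hu h1) (hZ2toP2 v hv h2))
  have huZ : u ∈ Z1 ∨ u ∈ Z2 := by
    rcases hmemC u hu with h | h
    · exact Or.inl (hsub1 u h)
    · exact Or.inr (hsub2 u h)
  have hvZ : v ∈ Z1 ∨ v ∈ Z2 := by
    rcases hmemC v hv with h | h
    · exact Or.inl (hsub1 v h)
    · exact Or.inr (hsub2 v h)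
  rcases huZ with huZ | huZ <;> rcases hvZ with hvZ | hvZ
  · exact hcase1 huZ hvZ
  · -- u ∈ Z1, v ∈ Z2
    rcases huZ with huA | huxy
    · rcases hvZ with hvB | hvxy
      · exact hABnadj u huA v hvB hadj
      · exact hcase1 (Or.inl huA) (Or.inr hvxy)
    · exact hcase2 (Or.inr huxy) hvZ
  · -- u ∈ Z2, v ∈ Z1
    rcases huZ with huB | huxy
    · rcases hvZ with hvA | hvxy
      · exact hABnadj v hvA u huB hadj.symm
      · exact hcase2 (Or.inl huB) (Or.inr hvxy)
    · exact hcase1 (Or.inr huxy) hvZ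
  · exact hcase2 huZ hvZ

/-- v is simplicial within s -/
def SimpIn (U : SimpleGraph V) (s : Finset V) (v : V) : Prop :=
  v ∈ s ∧ ∀ p ∈ s, ∀ q ∈ s, U.Adj v p → U.Adj v q → p ≠ q → U.Adj p q

lemma no_reach_pair {a b : V} (hab : a ≠ b) (hnadj : ¬ U.Adj a b)
    {Z : Set V} (hZ : Z ⊆ {a, b}) : ¬ ReachIn U Z a b := by
  rintro ⟨w, hw⟩
  cases w with
  | nil => exact hab rfl
  | cons h p =>
    rename_i x'
    have hx' : x' ∈ Z := hw x' (by simp)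
    have hm := hZ hx'
    simp only [Set.mem_insert_iff, Set.mem_singleton_iff] at hm
    rcases hm with rfl | rfl
    · exact U.irrefl h
    · exact hnadj h
 
lemma dirac (hchordal : ChordalGraph U) : ∀ (n : ℕ) (s : Finset V), s.card ≤ n → s.Nonempty →
    (∀ p ∈ s, ∀ q ∈ s, p ≠ q → U.Adj p q) ∨
    (∃ v w, SimpIn U s v ∧ SimpIn U s w ∧ v ≠ w ∧ ¬ U.Adj v w) := by
  classical
  intro n
  induction n with
  | zero =>
    intro s hcard hne
    obtain ⟨v, hv⟩ := hne
    simp [Finset.card_eq_zero] at hcard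
    simp [hcard] at hv
  | succ n ih =>
    intro s hcard hne
    by_cases hclique : ∀ p ∈ s, ∀ q ∈ s, p ≠ q → U.Adj p q
    · exact Or.inl hclique
    push_neg at hclique
    obtain ⟨a, has, b, hbs, hab, hnadj⟩ := hclique
    -- separators
    set t0 : Finset V := (s.erase a).erase b with ht0
    have hsep0 : ¬ ReachIn U (↑(s \ t0)) a b := by
      refine no_reach_pair hab hnadj ?_
      intro u hu
      simp only [Finset.coe_sdiff, Set.mem_diff, Finset.mem_coe] at hu
      by_cases hua : u = a
      · simp [hua]
      by_cases hub : u = b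
      · simp [hub]
      exact absurd (Finset.mem_erase.mpr ⟨hub, Finset.mem_erase.mpr ⟨hua, hu.1⟩⟩) hu.2
    set 𝒮 : Finset (Finset V) :=
      s.powerset.filter (fun t => t ⊆ (s.erase a).erase b ∧ ¬ ReachIn U (↑(s \ t)) a b) with h𝒮
    have h𝒮ne : 𝒮.Nonempty := by
      refine ⟨t0, ?_⟩
      rw [h𝒮, Finset.mem_filter, Finset.mem_powerset]
      exact ⟨(Finset.erase_subset _ _).trans (Finset.erase_subset _ _), le_refl _, hsep0⟩
    obtain ⟨S, hS𝒮, hSmin⟩ := Finset.exists_min_image 𝒮 Finset.card h𝒮ne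
    rw [h𝒮, Finset.mem_filter, Finset.mem_powerset] at hS𝒮
    obtain ⟨hSs, hSe, hsep⟩ := hS𝒮
    have haS : a ∉ S := fun h => by have := hSe h; simp [Finset.mem_erase] at this
    have hbS : b ∉ S := fun h => by have := hSe h; simp [Finset.mem_erase] at this
    have hmin : ∀ x ∈ (↑S : Set V), ReachIn U ((↑s \ ↑S) ∪ {x}) a b := by
      intro x hxS
      rw [Finset.mem_coe] at hxS
      have hxs : x ∈ s := hSs hxS
      by_contra hcon
      have hcoe : (↑(s \ S.erase x) : Set V) = (↑s \ ↑S) ∪ {x} := by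
        ext u
        by_cases hux : u = x <;>
          simp [hux, Finset.mem_erase, Finset.mem_sdiff, hxs, hxS, Set.mem_diff]
      have ht𝒮 : S.erase x ∈ 𝒮 := by
        rw [h𝒮, Finset.mem_filter, Finset.mem_powerset]
        refine ⟨(Finset.erase_subset _ _).trans hSs, (Finset.erase_subset _ _).trans hSe, ?_⟩
        rw [hcoe]
        exact hcon
      have := hSmin _ ht𝒮
      have := Finset.card_erase_lt_of_mem hxS
      omega
    have hsep' : ¬ ReachIn U ((↑s : Set V) \ ↑S) a b := by
      rw [← Finset.coe_sdiff]
      exact hsep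
    have hScl : ∀ x ∈ S, ∀ y ∈ S, x ≠ y → U.Adj x y := by
      intro x hx y hy hxy
      refine sepClique hchordal (s := ↑s) (S := ↑S) hnadj
        (fun u hu => Finset.mem_coe.mpr (hSs (Finset.mem_coe.mp hu)))
        (fun h => haS (Finset.mem_coe.mp h)) (fun h => hbS (Finset.mem_coe.mp h))
        (Finset.mem_coe.mpr has) hsep' hmin x (Finset.mem_coe.mpr hx) y (Finset.mem_coe.mpr hy) hxy
    have side : ∀ (c d : V), c ∈ s → c ∉ S → d ∈ s → d ∉ S → ¬ ReachIn U (↑(s \ S)) c d →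
        ∃ v, v ∈ s \ S ∧ ReachIn U (↑(s \ S)) c v ∧ SimpIn U s v := by
      intro c d hcs hcS hds hdS hsepcd
      set A : Finset V := (s \ S).filter (fun u => ReachIn U (↑(s \ S)) c u) with hA
      set A' : Finset V := A ∪ S with hA'
      have hAsub : A ⊆ s \ S := Finset.filter_subset _ _
      have hcA : c ∈ A := by
        rw [hA, Finset.mem_filter]
        exact ⟨Finset.mem_sdiff.mpr ⟨hcs, hcS⟩,
          ReachIn.refl' (Finset.mem_coe.mpr (Finset.mem_sdiff.mpr ⟨hcs, hcS⟩))⟩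
      have hA's : A' ⊆ s := by
        intro u hu
        rcases Finset.mem_union.mp hu with h | h
        · exact (Finset.mem_sdiff.mp (hAsub h)).1
        · exact hSs h
      have hdA' : d ∉ A' := by
        intro h
        rcases Finset.mem_union.mp h with h | h
        · exact hsepcd (Finset.mem_filter.mp h).2
        · exact hdS h
      have hcard : A'.card ≤ n := by
        have hss : A' ⊂ s := ⟨hA's, fun h => hdA' (h hds)⟩
        have := Finset.card_lt_card hss
        omega
      have hres := ih A' hcard ⟨c, Finset.mem_union_left _ hcA⟩
      have vsel : ∃ v ∈ A, SimpIn U A' v := by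
        rcases hres with hcl | ⟨v, w, hv, hw, hvw, hnvw⟩
        · exact ⟨c, hcA, ⟨Finset.mem_union_left _ hcA,
            fun p hp q hq _ _ hpq => hcl p hp q hq hpq⟩⟩
        · by_cases hvA : v ∈ A
          · exact ⟨v, hvA, hv⟩
          · have hvS : v ∈ S := (Finset.mem_union.mp hv.1).resolve_left hvA
            have hwA : w ∈ A := by
              by_contra hwA
              exact hnvw (hScl v hvS w ((Finset.mem_union.mp hw.1).resolve_left hwA) hvw)
            exact ⟨w, hwA, hw⟩
      obtain ⟨v, hvA, hvsimp⟩ := vsel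
      have hvsS : v ∈ s \ S := hAsub hvA
      have hvreach : ReachIn U (↑(s \ S)) c v := (Finset.mem_filter.mp hvA).2
      have hclosed : ∀ u ∈ s, U.Adj v u → u ∈ A' := by
        intro u hus hadj
        by_cases huS : u ∈ S
        · exact Finset.mem_union_right _ huS
        · refine Finset.mem_union_left _ ?_
          rw [hA, Finset.mem_filter]
          refine ⟨Finset.mem_sdiff.mpr ⟨hus, huS⟩, hvreach.trans' (ReachIn.adj' ?_ ?_ hadj)⟩
          · exact Finset.mem_coe.mpr hvsS
          · exact Finset.mem_coe.mpr (Finset.mem_sdiff.mpr ⟨hus, huS⟩)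
      refine ⟨v, hvsS, hvreach, ⟨(Finset.mem_sdiff.mp hvsS).1, ?_⟩⟩
      intro p hp q hq hvp hvq hpq
      exact hvsimp.2 p (hclosed p hp hvp) q (hclosed q hq hvq) hvp hvq hpq
    obtain ⟨vA, hvAmem, hvAreach, hvAsimp⟩ := side a b has haS hbs hbS hsep
    obtain ⟨vB, hvBmem, hvBreach, hvBsimp⟩ :=
      side b a hbs hbS has haS (fun h => hsep h.symm')
    refine Or.inr ⟨vA, vB, hvAsimp, hvBsimp, ?_, ?_⟩
    · intro h
      exact hsep (hvAreach.trans' (h ▸ hvBreach).symm')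
    · intro hadj
      exact hsep ((hvAreach.trans' (ReachIn.adj' (Finset.mem_coe.mpr hvAmem)
        (Finset.mem_coe.mpr hvBmem) hadj)).trans' hvBreach.symm')

lemma exists_simplicial (hchordal : ChordalGraph U) (s : Finset V) (hne : s.Nonempty) :
    ∃ v, SimpIn U s v := by
  rcases dirac hchordal s.card s le_rfl hne with hcl | ⟨v, _, hv, _⟩
  · obtain ⟨v, hv⟩ := hne
    exact ⟨v, hv, fun p hp q hq _ _ hpq => hcl p hp q hq hpq⟩
  · exact ⟨v, hv⟩

/-- L is a perfect-elimination-style list: earlier neighbors of any vertex are adjacent. -/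
def GoodL [DecidableEq V] (U : SimpleGraph V) (L : List V) : Prop :=
  ∀ p b q, p ∈ L → b ∈ L → q ∈ L → U.Adj p b → U.Adj q b → p ≠ q →
    L.idxOf p < L.idxOf b → L.idxOf q < L.idxOf b → U.Adj p q

lemma exists_goodList [DecidableEq V] (hchordal : ChordalGraph U) :
    ∀ (n : ℕ) (s : Finset V), s.card ≤ n →
      ∃ L : List V, L.Nodup ∧ (∀ u, u ∈ L ↔ u ∈ s) ∧ GoodL U L := by
  intro n
  induction n with
  | zero =>
    intro s hcard
    rw [Nat.le_zero, Finset.card_eq_zero] at hcard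
    exact ⟨[], List.nodup_nil, by simp [hcard], by intro p b q hp _ _; simp at hp⟩
  | succ n ih =>
    intro s hcard
    rcases s.eq_empty_or_nonempty with rfl | hne
    · exact ⟨[], List.nodup_nil, by simp, by intro p b q hp _ _; simp at hp⟩
    obtain ⟨v, hvs, hvsimp⟩ := exists_simplicial hchordal s hne
    obtain ⟨L', hnd', hmem', hgood'⟩ := ih (s.erase v) (by
      have := Finset.card_erase_of_mem hvs
      omega)
    have hvL' : v ∉ L' := fun h => (Finset.mem_erase.mp ((hmem' v).mp h)).1 rfl
    refine ⟨L' ++ [v], ?_, ?_, ?_⟩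
    · rw [List.nodup_append]
      exact ⟨hnd', List.nodup_singleton v, by
        intro u hu b hb
        simp at hb
        exact fun h => hvL' (hb ▸ h ▸ hu)⟩
    · intro u
      simp only [List.mem_append, List.mem_singleton, hmem' u, Finset.mem_erase]
      constructor
      · rintro (⟨_, h⟩ | rfl) <;> [exact h; exact hvs]
      · intro hu
        by_cases huv : u = v
        · exact Or.inr huv
        · exact Or.inl ⟨huv, hu⟩
    · intro p b q hp hb hq hadjp hadjq hpq hip hiq
      have hvidx : (L' ++ [v]).idxOf v = L'.length := by
        rw [List.idxOf_append_of_notMem hvL']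
        simp
      by_cases hbv : b = v
      · subst hbv
        have hpv : p ≠ b := by
          intro h; rw [h] at hip; omega
        have hqv : q ≠ b := by
          intro h; rw [h] at hiq; omega
        have hpL' : p ∈ L' := by
          rcases List.mem_append.mp hp with h | h
          · exact h
          · exact absurd (List.mem_singleton.mp h) hpv
        have hqL' : q ∈ L' := by
          rcases List.mem_append.mp hq with h | h
          · exact h
          · exact absurd (List.mem_singleton.mp h) hqv
        have hps : p ∈ s := (Finset.mem_erase.mp ((hmem' p).mp hpL')).2
        have hqs : q ∈ s := (Finset.mem_erase.mp ((hmem' q).mp hqL')).2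
        exact hvsimp p hps q hqs hadjp.symm hadjq.symm hpq
      · have hbL' : b ∈ L' := by
          rcases List.mem_append.mp hb with h | h
          · exact h
          · exact absurd (List.mem_singleton.mp h) hbv
        have hbidx : (L' ++ [v]).idxOf b = L'.idxOf b := List.idxOf_append_of_mem hbL'
        have hblt : L'.idxOf b < L'.length := List.idxOf_lt_length_iff.mpr hbL'
        have hpv : p ≠ v := by
          intro h; rw [h, hvidx, hbidx] at hip; omega
        have hqv : q ≠ v := by
          intro h; rw [h, hvidx, hbidx] at hiq; omega
        have hpL' : p ∈ L' := by
          rcases List.mem_append.mp hp with h | h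
          · exact h
          · exact absurd (List.mem_singleton.mp h) hpv
        have hqL' : q ∈ L' := by
          rcases List.mem_append.mp hq with h | h
          · exact h
          · exact absurd (List.mem_singleton.mp h) hqv
        refine hgood' p b q hpL' hbL' hqL' hadjp hadjq hpq ?_ ?_
        · rw [← List.idxOf_append_of_mem hpL' (l₂ := [v]), ← hbidx]; exact hip
        · rw [← List.idxOf_append_of_mem hqL' (l₂ := [v]), ← hbidx]; exact hiq

/-- the key of a vertex relative to a list -/
noncomputable def keyF [DecidableEq V] (L : List V) (u : V) : ℕ :=
  if u ∈ L then L.idxOf u else L.length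

/-- strict total order induced by a list, with well-order tie-breaking -/
noncomputable def rOf [DecidableEq V] (L : List V) : V → V → Prop :=
  fun u v => keyF L u < keyF L v ∨ (keyF L u = keyF L v ∧ WellOrderingRel u v)

lemma rOf_irrefl [DecidableEq V] (L : List V) (u : V) : ¬ rOf L u u := by
  rintro (h | ⟨_, h⟩)
  · omega
  · exact irrefl_of WellOrderingRel u h

lemma rOf_trans [DecidableEq V] (L : List V) {u v w : V}
    (h1 : rOf L u v) (h2 : rOf L v w) : rOf L u w := by
  rcases h1 with h1 | ⟨h1, h1'⟩ <;> rcases h2 with h2 | ⟨h2, h2'⟩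
  · exact Or.inl (h1.trans h2)
  · exact Or.inl (h2 ▸ h1)
  · exact Or.inl (h1 ▸ h2)
  · exact Or.inr ⟨h1.trans h2, trans_of WellOrderingRel h1' h2'⟩

lemma rOf_trichotomous [DecidableEq V] (L : List V) (u v : V) :
    rOf L u v ∨ u = v ∨ rOf L v u := by
  rcases lt_trichotomy (keyF L u) (keyF L v) with h | h | h
  · exact Or.inl (Or.inl h)
  · rcases trichotomous_of WellOrderingRel u v with h' | h' | h'
    · exact Or.inl (Or.inr ⟨h, h'⟩)
    · exact Or.inr (Or.inl h')
    · exact Or.inr (Or.inr (Or.inr ⟨h.symm, h'⟩))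
  · exact Or.inr (Or.inr (Or.inl h))

lemma rOf_indexOf [DecidableEq V] {L : List V} {u v : V} (hu : u ∈ L) (hv : v ∈ L)
    (h : rOf L u v) : L.idxOf u < L.idxOf v := by
  rcases h with h | ⟨h, hw⟩
  · simpa [keyF, hu, hv] using h
  · exfalso
    simp only [keyF, if_pos hu, if_pos hv] at h
    rw [List.idxOf_inj hu] at h
    subst h
    exact irrefl_of WellOrderingRel u hw

end Auxiliary

/-- If U is chordal, there exists a total order on the vertices whose
induced orientation of U has no unshielded collider. -/
theorem stmt5 {V : Type*} (U : SimpleGraph V) (hchordal : ChordalGraph U) :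
    ∃ r : V → V → Prop, IsStrictTotalOrder V r ∧
      ¬ HasUnshieldedCollider U (OrderOrientation U r) := by
  classical
  have hex : ∀ s : Finset V, ∃ L : List V, L.Nodup ∧ (∀ u, u ∈ L ↔ u ∈ s) ∧ GoodL U L :=
    fun s => exists_goodList hchordal s.card s le_rfl
  choose L hLnd hLmem hLgood using hex
  let 𝒰 : Ultrafilter (Finset V) := Ultrafilter.of Filter.atTop
  have h𝒰 : ∀ t : Finset V, {s : Finset V | t ⊆ s} ∈ 𝒰 := by
    intro t
    have h1 : {s : Finset V | t ⊆ s} ∈ (Filter.atTop : Filter (Finset V)) := Filter.mem_atTop t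
    exact (Ultrafilter.of_le Filter.atTop) h1
  set R : V → V → Prop := fun a b => {s : Finset V | rOf (L s) a b} ∈ 𝒰 with hR
  have htri : ∀ a b : V, R a b ∨ a = b ∨ R b a := by
    intro a b
    by_cases hab : a = b
    · exact Or.inr (Or.inl hab)
    have huniv : {s : Finset V | rOf (L s) a b} ∪ {s | rOf (L s) b a} = Set.univ := by
      ext s
      simp only [Set.mem_union, Set.mem_setOf_eq, Set.mem_univ, iff_true]
      rcases rOf_trichotomous (L s) a b with h | h | h
      · exact Or.inl h
      · exact absurd h hab
      · exact Or.inr h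
    have huu : {s : Finset V | rOf (L s) a b} ∪ {s | rOf (L s) b a} ∈ 𝒰 := by
      rw [huniv]; exact Filter.univ_mem
    rcases Ultrafilter.union_mem_iff.mp huu with h | h
    · exact Or.inl h
    · exact Or.inr (Or.inr h)
  have hirr : ∀ a : V, ¬ R a a := by
    intro a ha
    have hemp : {s : Finset V | rOf (L s) a a} = ∅ :=
      Set.eq_empty_iff_forall_notMem.mpr (fun s => rOf_irrefl (L s) a)
    rw [hR] at ha
    simp only [hemp] at ha
    exact Filter.empty_notMem _ ha
  have htrans : ∀ a b c : V, R a b → R b c → R a c := by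
    intro a b c h1 h2
    exact Filter.mem_of_superset (Filter.inter_mem h1 h2) (fun s hs => rOf_trans (L s) hs.1 hs.2)
  refine ⟨R, ?_, ?_⟩
  · exact { trichotomous := fun a b h1 h2 => ((htri a b).resolve_left h1).resolve_right h2
            irrefl := hirr
            trans := htrans }
  · rintro ⟨a, b, c, ⟨hab, hrab⟩, ⟨hcb, hrcb⟩, hac, hnadj⟩
    have hE : ({s : Finset V | ({a, b, c} : Finset V) ⊆ s} ∩
        ({s | rOf (L s) a b} ∩ {s | rOf (L s) c b})) ∈ 𝒰 :=
      Filter.inter_mem (h𝒰 _) (Filter.inter_mem hrab hrcb)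
    obtain ⟨s, hs1, hs2, hs3⟩ := Ultrafilter.nonempty_of_mem hE
    have haL : a ∈ L s := (hLmem s a).mpr (hs1 (by simp))
    have hbL : b ∈ L s := (hLmem s b).mpr (hs1 (by simp))
    have hcL : c ∈ L s := (hLmem s c).mpr (hs1 (by simp))
    exact hnadj (hLgood s a b c haL hbL hcL hab hcb hac
      (rOf_indexOf haL hbL hs2) (rOf_indexOf hcL hbL hs3))
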